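/- Assume additionally the no-tie condition: for all θ and all p ∈ 𝒫, D_θ({(r,a) : r = ⟨p,a⟩}) = 0; and assume P_max > R_max/b_min. Define L(w,p) := ⟨p,b⟩ + ∑_θ w_θ g_θ(p), H(w,p) := ∑_θ w_θ h_θ(p), and the active set A(p) := argmax_θ g_θ(p). Then a pair (w⋆, p⋆) ∈ Δ_K × 𝒫 is a saddle point of L (i.e. L(w, p⋆) ≤ L(w⋆, p⋆) ≤ L(w⋆, p) for all w ∈ Δ_K, p ∈ 𝒫) if and only if: (i) the support of w⋆ is contained in A(p⋆); (ii) H(w⋆, p⋆) ≤ b componentwise; (iii) ⟨p⋆, b − H(w⋆, p⋆)⟩ = 0. Moreover, for any such pair, ∑_θ w⋆_θ · E_{(r,a)∼D_θ}[r · 1{r > ⟨p⋆, a⟩}] = L(w⋆, p⋆). -/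

import Mathlib

open MeasureTheory

/-- Surplus function `g_θ(p) = E_{(r,a)∼D}[(r − ⟨p,a⟩)₊]`. -/
noncomputable def surplus {d : ℕ} (D : Measure (ℝ × (Fin d → ℝ))) (p : Fin d → ℝ) : ℝ :=
  ∫ z, max (z.1 - ∑ i, p i * z.2 i) 0 ∂D

/-- Threshold consumption `h_θ(p) = E_{(r,a)∼D}[a · 1{r > ⟨p,a⟩}]`. -/
noncomputable def consumption {d : ℕ} (D : Measure (ℝ × (Fin d → ℝ))) (p : Fin d → ℝ) :
    Fin d → ℝ :=
  fun i => ∫ z, (if (∑ j, p j * z.2 j) < z.1 then z.2 i else 0) ∂D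

section Helpers

open Filter

lemma SP.meas_dot {d : ℕ} (p : Fin d → ℝ) :
    Measurable (fun z : ℝ × (Fin d → ℝ) => ∑ i, p i * z.2 i) :=
  Finset.measurable_sum _ fun i _ => ((measurable_pi_apply i).comp measurable_snd).const_mul _

lemma SP.measSet_dot {d : ℕ} (p : Fin d → ℝ) :
    MeasurableSet {z : ℝ × (Fin d → ℝ) | ∑ i, p i * z.2 i < z.1} :=
  measurableSet_lt (SP.meas_dot p) measurable_fst

lemma SP.meas_surplusInt {d : ℕ} (p : Fin d → ℝ) :
    Measurable (fun z : ℝ × (Fin d → ℝ) => max (z.1 - ∑ i, p i * z.2 i) 0) :=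
  (measurable_fst.sub (SP.meas_dot p)).max measurable_const

lemma SP.meas_consInt {d : ℕ} (p : Fin d → ℝ) (i : Fin d) :
    Measurable (fun z : ℝ × (Fin d → ℝ) => if (∑ j, p j * z.2 j) < z.1 then z.2 i else 0) :=
  Measurable.ite (SP.measSet_dot p) ((measurable_pi_apply i).comp measurable_snd) measurable_const

lemma SP.meas_rInt {d : ℕ} (p : Fin d → ℝ) :
    Measurable (fun z : ℝ × (Fin d → ℝ) => if (∑ j, p j * z.2 j) < z.1 then z.1 else 0) :=
  Measurable.ite (SP.measSet_dot p) measurable_fst measurable_const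

lemma SP.bdd_integrable {d : ℕ} {μ : Measure (ℝ × (Fin d → ℝ))} [IsProbabilityMeasure μ]
    {f : ℝ × (Fin d → ℝ) → ℝ} (hf : Measurable f) {C : ℝ}
    (h : ∀ᵐ z ∂μ, |f z| ≤ C) : Integrable f μ :=
  (integrable_const C).mono' hf.aestronglyMeasurable (by simpa [Real.norm_eq_abs] using h)

lemma SP.integ_surplus {d : ℕ} {Rmax Amax : ℝ} {μ : Measure (ℝ × (Fin d → ℝ))}
    [IsProbabilityMeasure μ]
    (hDs : ∀ᵐ z ∂μ, 0 ≤ z.1 ∧ z.1 ≤ Rmax ∧ ∀ i, 0 ≤ z.2 i ∧ z.2 i ≤ Amax)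
    (p : Fin d → ℝ) (hp : ∀ i, 0 ≤ p i) :
    Integrable (fun z : ℝ × (Fin d → ℝ) => max (z.1 - ∑ i, p i * z.2 i) 0) μ := by
  refine SP.bdd_integrable (SP.meas_surplusInt p) (C := Rmax) ?_
  filter_upwards [hDs] with z hz
  obtain ⟨h0, h1, h2⟩ := hz
  have hs : 0 ≤ ∑ i, p i * z.2 i := Finset.sum_nonneg fun i _ => mul_nonneg (hp i) (h2 i).1
  rw [abs_of_nonneg (le_max_right _ _)]
  exact max_le (by linarith) (by linarith)

lemma SP.integ_cons {d : ℕ} {Rmax Amax : ℝ} {μ : Measure (ℝ × (Fin d → ℝ))}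
    [IsProbabilityMeasure μ]
    (hDs : ∀ᵐ z ∂μ, 0 ≤ z.1 ∧ z.1 ≤ Rmax ∧ ∀ i, 0 ≤ z.2 i ∧ z.2 i ≤ Amax)
    (p : Fin d → ℝ) (i : Fin d) :
    Integrable (fun z : ℝ × (Fin d → ℝ) => if (∑ j, p j * z.2 j) < z.1 then z.2 i else 0) μ := by
  refine SP.bdd_integrable (SP.meas_consInt p i) (C := Amax) ?_
  filter_upwards [hDs] with z hz
  obtain ⟨h0, h1, h2⟩ := hz
  split_ifs
  · rw [abs_of_nonneg (h2 i).1]; exact (h2 i).2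
  · simpa using le_trans (h2 i).1 (h2 i).2

lemma SP.integ_r {d : ℕ} {Rmax Amax : ℝ} {μ : Measure (ℝ × (Fin d → ℝ))}
    [IsProbabilityMeasure μ]
    (hDs : ∀ᵐ z ∂μ, 0 ≤ z.1 ∧ z.1 ≤ Rmax ∧ ∀ i, 0 ≤ z.2 i ∧ z.2 i ≤ Amax)
    (p : Fin d → ℝ) :
    Integrable (fun z : ℝ × (Fin d → ℝ) => if (∑ j, p j * z.2 j) < z.1 then z.1 else 0) μ := by
  refine SP.bdd_integrable (SP.meas_rInt p) (C := Rmax) ?_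
  filter_upwards [hDs] with z hz
  obtain ⟨h0, h1, h2⟩ := hz
  split_ifs
  · rw [abs_of_nonneg h0]; exact h1
  · simpa using le_trans h0 h1

lemma SP.ptw_lb (r sp sq : ℝ) :
    max (r - sp) 0 - (if sp < r then sq - sp else 0) ≤ max (r - sq) 0 := by
  split_ifs with h
  · rw [max_eq_left (by linarith : (0:ℝ) ≤ r - sp)]
    have := le_max_left (r - sq) (0:ℝ)
    linarith
  · push_neg at h
    rw [max_eq_right (by linarith : r - sp ≤ (0:ℝ))]
    have := le_max_right (r - sq) (0:ℝ)
    linarith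

lemma SP.ptw_ub (r sp sq : ℝ) :
    max (r - sq) 0 ≤ max (r - sp) 0 - (if sq < r then sq - sp else 0) := by
  split_ifs with h
  · rw [max_eq_left (by linarith : (0:ℝ) ≤ r - sq)]
    have := le_max_left (r - sp) (0:ℝ)
    linarith
  · push_neg at h
    rw [max_eq_right (by linarith : r - sq ≤ (0:ℝ))]
    have := le_max_right (r - sp) (0:ℝ)
    linarith

lemma SP.if_dot_eq {d : ℕ} (p q : Fin d → ℝ) (z : ℝ × (Fin d → ℝ)) (c : Prop) [Decidable c] :
    (if c then (∑ i, q i * z.2 i) - (∑ i, p i * z.2 i) else 0)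
      = ∑ i, (q i - p i) * (if c then z.2 i else 0) := by
  split_ifs with h
  · rw [← Finset.sum_sub_distrib]
    exact Finset.sum_congr rfl fun i _ => by ring
  · simp

lemma SP.swap_sum {K d : ℕ} (w : Fin K → ℝ) (x : Fin d → ℝ) (h : Fin K → Fin d → ℝ) :
    ∑ θ, w θ * ∑ j, x j * h θ j = ∑ j, x j * ∑ θ, w θ * h θ j := by
  simp_rw [Finset.mul_sum]
  rw [Finset.sum_comm]
  exact Finset.sum_congr rfl fun j _ => Finset.sum_congr rfl fun θ _ => by ring

lemma SP.surplus_lb {d : ℕ} {Rmax Amax : ℝ} {μ : Measure (ℝ × (Fin d → ℝ))}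
    [IsProbabilityMeasure μ]
    (hDs : ∀ᵐ z ∂μ, 0 ≤ z.1 ∧ z.1 ≤ Rmax ∧ ∀ i, 0 ≤ z.2 i ∧ z.2 i ≤ Amax)
    (p q : Fin d → ℝ) (hp : ∀ i, 0 ≤ p i) (hq : ∀ i, 0 ≤ q i) :
    surplus μ p - ∑ i, (q i - p i) * consumption μ p i ≤ surplus μ q := by
  have key : ∀ z : ℝ × (Fin d → ℝ),
      (max (z.1 - ∑ i, p i * z.2 i) 0
        - ∑ i, (q i - p i) * (if (∑ j, p j * z.2 j) < z.1 then z.2 i else 0))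
        ≤ max (z.1 - ∑ i, q i * z.2 i) 0 := by
    intro z
    rw [← SP.if_dot_eq p q z]
    exact SP.ptw_lb z.1 _ _
  have h1 : Integrable (fun z : ℝ × (Fin d → ℝ) =>
      max (z.1 - ∑ i, p i * z.2 i) 0
        - ∑ i, (q i - p i) * (if (∑ j, p j * z.2 j) < z.1 then z.2 i else 0)) μ :=
    (SP.integ_surplus hDs p hp).sub (integrable_finset_sum _ fun i _ =>
      (SP.integ_cons hDs p i).const_mul _)
  have := integral_mono h1 (SP.integ_surplus hDs q hq) key
  rw [integral_sub (SP.integ_surplus hDs p hp) (integrable_finset_sum _ fun i _ =>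
      (SP.integ_cons hDs p i).const_mul _),
    integral_finset_sum _ (fun i _ => (SP.integ_cons hDs p i).const_mul _)] at this
  simp only [integral_const_mul] at this
  exact this

lemma SP.surplus_ub {d : ℕ} {Rmax Amax : ℝ} {μ : Measure (ℝ × (Fin d → ℝ))}
    [IsProbabilityMeasure μ]
    (hDs : ∀ᵐ z ∂μ, 0 ≤ z.1 ∧ z.1 ≤ Rmax ∧ ∀ i, 0 ≤ z.2 i ∧ z.2 i ≤ Amax)
    (p q : Fin d → ℝ) (hp : ∀ i, 0 ≤ p i) (hq : ∀ i, 0 ≤ q i) :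
    surplus μ q ≤ surplus μ p - ∑ i, (q i - p i) * consumption μ q i := by
  have key : ∀ z : ℝ × (Fin d → ℝ),
      max (z.1 - ∑ i, q i * z.2 i) 0
        ≤ (max (z.1 - ∑ i, p i * z.2 i) 0
          - ∑ i, (q i - p i) * (if (∑ j, q j * z.2 j) < z.1 then z.2 i else 0)) := by
    intro z
    rw [← SP.if_dot_eq p q z]
    exact SP.ptw_ub z.1 _ _
  have h1 : Integrable (fun z : ℝ × (Fin d → ℝ) =>
      max (z.1 - ∑ i, p i * z.2 i) 0
        - ∑ i, (q i - p i) * (if (∑ j, q j * z.2 j) < z.1 then z.2 i else 0)) μ :=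
    (SP.integ_surplus hDs p hp).sub (integrable_finset_sum _ fun i _ =>
      (SP.integ_cons hDs q i).const_mul _)
  have := integral_mono (SP.integ_surplus hDs q hq) h1 key
  rw [integral_sub (SP.integ_surplus hDs p hp) (integrable_finset_sum _ fun i _ =>
      (SP.integ_cons hDs q i).const_mul _),
    integral_finset_sum _ (fun i _ => (SP.integ_cons hDs q i).const_mul _)] at this
  simp only [integral_const_mul] at this
  exact this

lemma SP.cons_tendsto {d : ℕ} {Rmax Amax : ℝ} {μ : Measure (ℝ × (Fin d → ℝ))}
    [IsProbabilityMeasure μ]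
    (hDs : ∀ᵐ z ∂μ, 0 ≤ z.1 ∧ z.1 ≤ Rmax ∧ ∀ i, 0 ≤ z.2 i ∧ z.2 i ≤ Amax)
    (p : Fin d → ℝ) (hnt : μ {z | z.1 = ∑ i, p i * z.2 i} = 0)
    (q : ℕ → Fin d → ℝ) (hq : ∀ i, Tendsto (fun n => q n i) atTop (nhds (p i))) (i : Fin d) :
    Tendsto (fun n => consumption μ (q n) i) atTop (nhds (consumption μ p i)) := by
  unfold consumption
  apply tendsto_integral_of_dominated_convergence (bound := fun _ => Amax)
  · exact fun n => (SP.meas_consInt (q n) i).aestronglyMeasurable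
  · exact integrable_const _
  · intro n
    filter_upwards [hDs] with z hz
    obtain ⟨h0, h1, h2⟩ := hz
    rw [Real.norm_eq_abs]
    split_ifs
    · rw [abs_of_nonneg (h2 i).1]; exact (h2 i).2
    · simpa using le_trans (h2 i).1 (h2 i).2
  · have hae : ∀ᵐ z ∂μ, z.1 ≠ ∑ j, p j * z.2 j := by
      rw [ae_iff]
      simpa using hnt
    filter_upwards [hae] with z hz
    have hS : Tendsto (fun n => ∑ j, q n j * z.2 j) atTop (nhds (∑ j, p j * z.2 j)) :=
      tendsto_finset_sum _ fun j _ => (hq j).mul_const _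
    rcases lt_or_gt_of_ne hz with hlt | hgt
    · rw [if_neg (not_lt.2 hlt.le)]
      refine Tendsto.congr' ?_ tendsto_const_nhds
      filter_upwards [hS.eventually_const_lt hlt] with n hn
      rw [if_neg (not_lt.2 hn.le)]
    · rw [if_pos hgt]
      refine Tendsto.congr' ?_ tendsto_const_nhds
      filter_upwards [hS.eventually_lt_const hgt] with n hn
      rw [if_pos hn]

lemma SP.r_decomp {d : ℕ} (p : Fin d → ℝ) (z : ℝ × (Fin d → ℝ)) :
    (if (∑ j, p j * z.2 j) < z.1 then z.1 else 0)
      = max (z.1 - ∑ i, p i * z.2 i) 0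
        + ∑ i, p i * (if (∑ j, p j * z.2 j) < z.1 then z.2 i else 0) := by
  by_cases h : (∑ j, p j * z.2 j) < z.1
  · rw [if_pos h, max_eq_left (by linarith : (0:ℝ) ≤ z.1 - ∑ i, p i * z.2 i)]
    have he : ∑ i, p i * (if (∑ j, p j * z.2 j) < z.1 then z.2 i else 0) = ∑ i, p i * z.2 i :=
      Finset.sum_congr rfl fun i _ => by rw [if_pos h]
    rw [he]; ring
  · push_neg at h
    rw [if_neg (not_lt.2 h), max_eq_right (by linarith : z.1 - ∑ i, p i * z.2 i ≤ (0:ℝ))]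
    simp [if_neg (not_lt.2 h)]

lemma SP.tendsto_div_nat (c : ℝ) : Tendsto (fun n : ℕ => c / ((n:ℝ)+1)) atTop (nhds 0) :=
  Tendsto.div_atTop tendsto_const_nhds
    (tendsto_atTop_add_const_right atTop 1 tendsto_natCast_atTop_atTop)

end Helpers

theorem stmt1 (K d : ℕ) (hK : 1 ≤ K) (hd : 1 ≤ d)
    (Rmax Amax : ℝ) (hR : 0 < Rmax) (hA : 0 < Amax)
    (D : Fin K → Measure (ℝ × (Fin d → ℝ)))
    (hDp : ∀ θ, IsProbabilityMeasure (D θ))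
    (hDs : ∀ θ, ∀ᵐ z ∂ D θ, 0 ≤ z.1 ∧ z.1 ≤ Rmax ∧ ∀ i, 0 ≤ z.2 i ∧ z.2 i ≤ Amax)
    (b : Fin d → ℝ) (hb : ∀ i, 0 < b i)
    (bmin : ℝ) (hbmin : IsLeast (Set.range b) bmin)
    (Pmax : ℝ) (hP : Rmax / bmin < Pmax)
    (hnotie : ∀ θ, ∀ p : Fin d → ℝ, (∀ i, p i ∈ Set.Icc 0 Pmax) →
      D θ {z | z.1 = ∑ i, p i * z.2 i} = 0)
    (L : (Fin K → ℝ) → (Fin d → ℝ) → ℝ)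
    (hL : ∀ w p, L w p = (∑ i, p i * b i) + ∑ θ, w θ * surplus (D θ) p)
    (H : (Fin K → ℝ) → (Fin d → ℝ) → Fin d → ℝ)
    (hH : ∀ w p i, H w p i = ∑ θ, w θ * consumption (D θ) p i)
    (wstar : Fin K → ℝ) (hw : (∀ θ, 0 ≤ wstar θ) ∧ ∑ θ, wstar θ = 1)
    (pstar : Fin d → ℝ) (hpP : ∀ i, pstar i ∈ Set.Icc 0 Pmax) :
    (((∀ w : Fin K → ℝ, (∀ θ, 0 ≤ w θ) ∧ ∑ θ, w θ = 1 → L w pstar ≤ L wstar pstar) ∧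
      (∀ p : Fin d → ℝ, (∀ i, p i ∈ Set.Icc 0 Pmax) → L wstar pstar ≤ L wstar p))
      ↔
      ((∀ θ, 0 < wstar θ → ∀ θ', surplus (D θ') pstar ≤ surplus (D θ) pstar) ∧
       (∀ i, H wstar pstar i ≤ b i) ∧
       (∑ i, pstar i * (b i - H wstar pstar i)) = 0))
    ∧
    (((∀ w : Fin K → ℝ, (∀ θ, 0 ≤ w θ) ∧ ∑ θ, w θ = 1 → L w pstar ≤ L wstar pstar) ∧
      (∀ p : Fin d → ℝ, (∀ i, p i ∈ Set.Icc 0 Pmax) → L wstar pstar ≤ L wstar p)) →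
      (∑ θ, wstar θ * ∫ z, (if (∑ i, pstar i * z.2 i) < z.1 then z.1 else 0) ∂ D θ)
        = L wstar pstar) := by
  classical
  haveI := hDp
  obtain ⟨hw0, hw1⟩ := hw
  have hps : ∀ i, 0 ≤ pstar i := fun i => (hpP i).1
  obtain ⟨i0, hi0⟩ := hbmin.1
  have hbminpos : 0 < bmin := hi0 ▸ hb i0
  have hPmaxpos : 0 < Pmax := lt_trans (div_pos hR hbminpos) hP
  have hbminle : ∀ i, bmin ≤ b i := fun i => hbmin.2 ⟨i, rfl⟩
  haveI : Nonempty (Fin K) := ⟨⟨0, hK⟩⟩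
  -- abbreviation for H at wstar
  set Hc : (Fin d → ℝ) → Fin d → ℝ :=
    fun q i => ∑ θ, wstar θ * consumption (D θ) q i with hHc
  have hHeq : ∀ i, H wstar pstar i = Hc pstar i := fun i => hH wstar pstar i
  -- the direct bound when pstar i = Pmax
  have hdirect : ∀ i, pstar i = Pmax → Hc pstar i ≤ b i := by
    intro i heq
    have hcons : ∀ θ, consumption (D θ) pstar i ≤ Rmax / Pmax := by
      intro θ
      have hmono : ∫ z, (if (∑ j, pstar j * z.2 j) < z.1 then z.2 i else 0) ∂ D θ
          ≤ ∫ _, Rmax / Pmax ∂ D θ := by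
        apply integral_mono_ae (SP.integ_cons (hDs θ) pstar i) (integrable_const _)
        filter_upwards [hDs θ] with z hz
        obtain ⟨h0, h1, h2⟩ := hz
        split_ifs with hcond
        · have hsingle : pstar i * z.2 i ≤ ∑ j, pstar j * z.2 j :=
            Finset.single_le_sum (f := fun j => pstar j * z.2 j)
              (fun j _ => mul_nonneg (hps j) (h2 j).1) (Finset.mem_univ i)
          rw [le_div_iff₀ hPmaxpos]
          have : Pmax * z.2 i = pstar i * z.2 i := by rw [heq]
          nlinarith
        · positivity
      simpa [consumption] using hmono
    have hsum : Hc pstar i ≤ ∑ θ, wstar θ * (Rmax / Pmax) :=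
      Finset.sum_le_sum fun θ _ => mul_le_mul_of_nonneg_left (hcons θ) (hw0 θ)
    rw [← Finset.sum_mul, hw1, one_mul] at hsum
    have hlt : Rmax / Pmax < bmin := by
      rw [div_lt_iff₀ hPmaxpos]
      rw [div_lt_iff₀ hbminpos] at hP
      nlinarith
    exact le_trans hsum (le_trans hlt.le (hbminle i))
  have hiff : ((∀ w : Fin K → ℝ, (∀ θ, 0 ≤ w θ) ∧ ∑ θ, w θ = 1 → L w pstar ≤ L wstar pstar) ∧
      (∀ p : Fin d → ℝ, (∀ i, p i ∈ Set.Icc 0 Pmax) → L wstar pstar ≤ L wstar p))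
      ↔
      ((∀ θ, 0 < wstar θ → ∀ θ', surplus (D θ') pstar ≤ surplus (D θ) pstar) ∧
       (∀ i, H wstar pstar i ≤ b i) ∧
       (∑ i, pstar i * (b i - H wstar pstar i)) = 0) := by
    constructor
    · -- forward direction
      rintro ⟨hsw, hsp⟩
      -- (i)
      obtain ⟨θ0, -, hθ0⟩ := Finset.exists_max_image Finset.univ
        (fun θ => surplus (D θ) pstar) Finset.univ_nonempty
      have hθ0' : ∀ θ, surplus (D θ) pstar ≤ surplus (D θ0) pstar :=
        fun θ => hθ0 θ (Finset.mem_univ θ)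
      have hmax_le : surplus (D θ0) pstar ≤ ∑ θ, wstar θ * surplus (D θ) pstar := by
        have h := hsw (fun θ => if θ = θ0 then 1 else 0)
          ⟨fun θ => by split_ifs <;> norm_num, by simp⟩
        rw [hL, hL] at h
        have h2 : ∑ θ, (if θ = θ0 then (1:ℝ) else 0) * surplus (D θ) pstar
            = surplus (D θ0) pstar := by
          rw [Finset.sum_eq_single θ0]
          · simp
          · intro j _ hj; simp [hj]
          · intro h; exact absurd (Finset.mem_univ θ0) h
        linarith [h, h2.symm.le]
      have hle_max : ∑ θ, wstar θ * surplus (D θ) pstar ≤ surplus (D θ0) pstar := by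
        calc ∑ θ, wstar θ * surplus (D θ) pstar
            ≤ ∑ θ, wstar θ * surplus (D θ0) pstar :=
              Finset.sum_le_sum fun θ _ => mul_le_mul_of_nonneg_left (hθ0' θ) (hw0 θ)
          _ = surplus (D θ0) pstar := by rw [← Finset.sum_mul, hw1, one_mul]
      have heqm : ∑ θ, wstar θ * surplus (D θ) pstar = surplus (D θ0) pstar :=
        le_antisymm hle_max hmax_le
      have hzero : ∑ θ, wstar θ * (surplus (D θ0) pstar - surplus (D θ) pstar) = 0 := by
        simp only [mul_sub]
        rw [Finset.sum_sub_distrib, ← Finset.sum_mul, hw1, one_mul, heqm, sub_self]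
      have hterm : ∀ θ ∈ Finset.univ,
          wstar θ * (surplus (D θ0) pstar - surplus (D θ) pstar) = 0 :=
        (Finset.sum_eq_zero_iff_of_nonneg (fun θ _ =>
          mul_nonneg (hw0 θ) (by linarith [hθ0' θ]))).1 hzero
      have hi : ∀ θ, 0 < wstar θ → ∀ θ', surplus (D θ') pstar ≤ surplus (D θ) pstar := by
        intro θ hpos θ'
        have := hterm θ (Finset.mem_univ θ)
        have heq2 : surplus (D θ) pstar = surplus (D θ0) pstar := by
          rcases mul_eq_zero.1 this with h | h
          · exact absurd h (ne_of_gt hpos)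
          · linarith
        rw [heq2]; exact hθ0' θ'
      -- claim1 from minimality
      have claim1 : ∀ q : Fin d → ℝ, (∀ i, q i ∈ Set.Icc 0 Pmax) →
          ∑ j, (q j - pstar j) * Hc q j ≤ ∑ j, (q j - pstar j) * b j := by
        intro q hqP
        have hq0 : ∀ i, 0 ≤ q i := fun i => (hqP i).1
        have hub : ∑ θ, wstar θ * surplus (D θ) q
            ≤ ∑ θ, wstar θ * (surplus (D θ) pstar
              - ∑ j, (q j - pstar j) * consumption (D θ) q j) :=
          Finset.sum_le_sum fun θ _ => mul_le_mul_of_nonneg_left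
            (SP.surplus_ub (hDs θ) pstar q hps hq0) (hw0 θ)
        have hexp : ∑ θ, wstar θ * (surplus (D θ) pstar
              - ∑ j, (q j - pstar j) * consumption (D θ) q j)
            = ∑ θ, wstar θ * surplus (D θ) pstar - ∑ j, (q j - pstar j) * Hc q j := by
          rw [← SP.swap_sum wstar (fun j => q j - pstar j)
            (fun θ j => consumption (D θ) q j), ← Finset.sum_sub_distrib]
          exact Finset.sum_congr rfl fun θ _ => by ring
        rw [hexp] at hub
        have hmin := hsp q hqP
        rw [hL, hL] at hmin
        have hb' : ∑ i, q i * b i - ∑ i, pstar i * b i = ∑ j, (q j - pstar j) * b j := by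
          rw [← Finset.sum_sub_distrib]
          exact Finset.sum_congr rfl fun j _ => by ring
        linarith
      -- (ii)
      have hii : ∀ i, Hc pstar i ≤ b i := by
        intro i
        rcases lt_or_eq_of_le (hpP i).2 with hlt | heq
        · set c := Pmax - pstar i with hc
          have hcpos : 0 < c := by simp only [hc]; linarith
          have hbd : ∀ n : ℕ,
              Hc (Function.update pstar i (pstar i + c / ((n:ℝ)+1))) i ≤ b i := by
            intro n
            have hn1 : (0:ℝ) < (n:ℝ)+1 := by positivity
            have htn : 0 < c / ((n:ℝ)+1) := div_pos hcpos hn1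
            have htle : c / ((n:ℝ)+1) ≤ c := by
              rw [div_le_iff₀ hn1]; nlinarith
            set q := Function.update pstar i (pstar i + c / ((n:ℝ)+1)) with hqdef
            have hqP : ∀ j, q j ∈ Set.Icc 0 Pmax := by
              intro j
              by_cases hji : j = i
              · subst hji
                rw [hqdef, Function.update_self]
                constructor
                · have := hps j; linarith
                · simp only [hc] at htle; linarith
              · rw [hqdef, Function.update_of_ne hji]; exact hpP j
            have hkey := claim1 q hqP
            have hsum : ∀ x : Fin d → ℝ,
                ∑ j, (q j - pstar j) * x j = (c / ((n:ℝ)+1)) * x i := by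
              intro x
              rw [Finset.sum_eq_single i]
              · rw [hqdef, Function.update_self]; ring
              · intro j _ hji; rw [hqdef, Function.update_of_ne hji]; ring
              · intro h; exact absurd (Finset.mem_univ i) h
            rw [hsum, hsum] at hkey
            exact le_of_mul_le_mul_left hkey htn
          have hq : ∀ j, Filter.Tendsto
              (fun n : ℕ => Function.update pstar i (pstar i + c / ((n:ℝ)+1)) j)
              Filter.atTop (nhds (pstar j)) := by
            intro j
            by_cases hji : j = i
            · subst hji
              simp only [Function.update_self]
              have := Filter.Tendsto.const_add (pstar j) (SP.tendsto_div_nat c)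
              simpa using this
            · simp only [Function.update_of_ne hji]
              exact tendsto_const_nhds
          have hT : Filter.Tendsto
              (fun n : ℕ => Hc (Function.update pstar i (pstar i + c / ((n:ℝ)+1))) i)
              Filter.atTop (nhds (Hc pstar i)) :=
            tendsto_finset_sum _ fun θ _ =>
              (SP.cons_tendsto (hDs θ) pstar (hnotie θ pstar hpP) _ hq i).const_mul _
          exact le_of_tendsto hT (Filter.Eventually.of_forall hbd)
        · exact hdirect i heq
      -- (iii)
      have hiii : ∑ i, pstar i * (b i - Hc pstar i) = 0 := by
        refine Finset.sum_eq_zero fun i _ => ?_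
        rcases eq_or_lt_of_le (hps i) with h0 | hpos
        · rw [← h0]; ring
        · have hge : b i ≤ Hc pstar i := by
            set c := pstar i with hc
            have hbd : ∀ n : ℕ,
                b i ≤ Hc (Function.update pstar i (pstar i - c / ((n:ℝ)+1))) i := by
              intro n
              have hn1 : (0:ℝ) < (n:ℝ)+1 := by positivity
              have htn : 0 < c / ((n:ℝ)+1) := div_pos hpos hn1
              have htle : c / ((n:ℝ)+1) ≤ c := by
                rw [div_le_iff₀ hn1]; nlinarith
              set q := Function.update pstar i (pstar i - c / ((n:ℝ)+1)) with hqdef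
              have hqP : ∀ j, q j ∈ Set.Icc 0 Pmax := by
                intro j
                by_cases hji : j = i
                · subst hji
                  rw [hqdef, Function.update_self]
                  constructor
                  · simp only [hc] at htle ⊢; linarith
                  · have := (hpP j).2; linarith [htn]
                · rw [hqdef, Function.update_of_ne hji]; exact hpP j
              have hkey := claim1 q hqP
              have hsum : ∀ x : Fin d → ℝ,
                  ∑ j, (q j - pstar j) * x j = -(c / ((n:ℝ)+1) * x i) := by
                intro x
                rw [Finset.sum_eq_single i]
                · rw [hqdef, Function.update_self]; ring
                · intro j _ hji; rw [hqdef, Function.update_of_ne hji]; ring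
                · intro h; exact absurd (Finset.mem_univ i) h
              rw [hsum, hsum] at hkey
              have h2 : c / ((n:ℝ)+1) * b i ≤ c / ((n:ℝ)+1) * Hc q i := by linarith
              exact le_of_mul_le_mul_left h2 htn
            have hq : ∀ j, Filter.Tendsto
                (fun n : ℕ => Function.update pstar i (pstar i - c / ((n:ℝ)+1)) j)
                Filter.atTop (nhds (pstar j)) := by
              intro j
              by_cases hji : j = i
              · subst hji
                simp only [Function.update_self]
                have := Filter.Tendsto.const_sub (pstar j) (SP.tendsto_div_nat c)
                simpa using this
              · simp only [Function.update_of_ne hji]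
                exact tendsto_const_nhds
            have hT : Filter.Tendsto
                (fun n : ℕ => Hc (Function.update pstar i (pstar i - c / ((n:ℝ)+1))) i)
                Filter.atTop (nhds (Hc pstar i)) :=
              tendsto_finset_sum _ fun θ _ =>
                (SP.cons_tendsto (hDs θ) pstar (hnotie θ pstar hpP) _ hq i).const_mul _
            exact ge_of_tendsto hT (Filter.Eventually.of_forall hbd)
          have : Hc pstar i = b i := le_antisymm (hii i) hge
          rw [this]; ring
      refine ⟨hi, fun i => by rw [hHeq i]; exact hii i, ?_⟩
      calc ∑ i, pstar i * (b i - H wstar pstar i)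
          = ∑ i, pstar i * (b i - Hc pstar i) :=
            Finset.sum_congr rfl fun i _ => by rw [hHeq i]
        _ = 0 := hiii
    · -- backward direction
      rintro ⟨hi, hii', hiii'⟩
      have hii : ∀ i, Hc pstar i ≤ b i := fun i => by rw [← hHeq i]; exact hii' i
      have hiii : ∑ i, pstar i * (b i - Hc pstar i) = 0 := by
        rw [← hiii']
        exact Finset.sum_congr rfl fun i _ => by rw [hHeq i]
      constructor
      · -- w-side
        intro w hwΔ
        obtain ⟨hw0', hw1'⟩ := hwΔ
        have hex : ∃ θc, 0 < wstar θc := by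
          by_contra hcon
          push_neg at hcon
          have : ∑ θ, wstar θ = 0 :=
            Finset.sum_eq_zero fun θ _ => le_antisymm (hcon θ) (hw0 θ)
          rw [hw1] at this; norm_num at this
        obtain ⟨θc, hθc⟩ := hex
        have hmax : ∀ θ', surplus (D θ') pstar ≤ surplus (D θc) pstar := hi θc hθc
        have h1 : ∑ θ, w θ * surplus (D θ) pstar ≤ surplus (D θc) pstar := by
          calc ∑ θ, w θ * surplus (D θ) pstar
              ≤ ∑ θ, w θ * surplus (D θc) pstar :=
                Finset.sum_le_sum fun θ _ => mul_le_mul_of_nonneg_left (hmax θ) (hw0' θ)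
            _ = surplus (D θc) pstar := by rw [← Finset.sum_mul, hw1', one_mul]
        have h2 : ∑ θ, wstar θ * surplus (D θ) pstar = surplus (D θc) pstar := by
          have : ∀ θ ∈ Finset.univ, wstar θ * surplus (D θ) pstar
              = wstar θ * surplus (D θc) pstar := by
            intro θ _
            rcases eq_or_lt_of_le (hw0 θ) with h0 | hpos
            · rw [← h0]; ring
            · have := le_antisymm (hmax θ) (hi θ hpos θc)
              rw [this]
          rw [Finset.sum_congr rfl this, ← Finset.sum_mul, hw1, one_mul]
        rw [hL, hL]
        linarith
      · -- p-side
        intro q hqP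
        have hq0 : ∀ i, 0 ≤ q i := fun i => (hqP i).1
        have hlb : ∑ θ, wstar θ * (surplus (D θ) pstar
              - ∑ j, (q j - pstar j) * consumption (D θ) pstar j)
            ≤ ∑ θ, wstar θ * surplus (D θ) q :=
          Finset.sum_le_sum fun θ _ => mul_le_mul_of_nonneg_left
            (SP.surplus_lb (hDs θ) pstar q hps hq0) (hw0 θ)
        have hexp : ∑ θ, wstar θ * (surplus (D θ) pstar
              - ∑ j, (q j - pstar j) * consumption (D θ) pstar j)
            = ∑ θ, wstar θ * surplus (D θ) pstar
              - ∑ j, (q j - pstar j) * Hc pstar j := by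
          rw [← SP.swap_sum wstar (fun j => q j - pstar j)
            (fun θ j => consumption (D θ) pstar j), ← Finset.sum_sub_distrib]
          exact Finset.sum_congr rfl fun θ _ => by ring
        rw [hexp] at hlb
        have hsplit : ∑ j, (q j - pstar j) * (b j - Hc pstar j)
            = ∑ j, q j * (b j - Hc pstar j) - ∑ j, pstar j * (b j - Hc pstar j) := by
          rw [← Finset.sum_sub_distrib]
          exact Finset.sum_congr rfl fun j _ => by ring
        have hqnn : 0 ≤ ∑ j, q j * (b j - Hc pstar j) :=
          Finset.sum_nonneg fun j _ => mul_nonneg (hq0 j) (by linarith [hii j])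
        have hkey : ∑ j, (q j - pstar j) * Hc pstar j ≤ ∑ j, (q j - pstar j) * b j := by
          have hd1 : ∑ j, (q j - pstar j) * b j - ∑ j, (q j - pstar j) * Hc pstar j
              = ∑ j, (q j - pstar j) * (b j - Hc pstar j) := by
            rw [← Finset.sum_sub_distrib]
            exact Finset.sum_congr rfl fun j _ => by ring
          rw [hsplit, hiii] at hd1
          linarith
        have hb' : ∑ i, q i * b i - ∑ i, pstar i * b i = ∑ j, (q j - pstar j) * b j := by
          rw [← Finset.sum_sub_distrib]
          exact Finset.sum_congr rfl fun j _ => by ring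
        rw [hL, hL]
        linarith
  refine ⟨hiff, fun hsaddle => ?_⟩
  obtain ⟨hi, hii', hiii'⟩ := hiff.1 hsaddle
  have hrid : ∀ θ, (∫ z, (if (∑ i, pstar i * z.2 i) < z.1 then z.1 else 0) ∂ D θ)
      = surplus (D θ) pstar + ∑ j, pstar j * consumption (D θ) pstar j := by
    intro θ
    have hcongr : (∫ z, (if (∑ i, pstar i * z.2 i) < z.1 then z.1 else 0) ∂ D θ)
        = ∫ z, (max (z.1 - ∑ i, pstar i * z.2 i) 0
            + ∑ i, pstar i * (if (∑ j, pstar j * z.2 j) < z.1 then z.2 i else 0)) ∂ D θ :=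
      integral_congr_ae (Filter.Eventually.of_forall fun z => SP.r_decomp pstar z)
    rw [hcongr, integral_add (SP.integ_surplus (hDs θ) pstar hps)
        (integrable_finset_sum _ fun i _ => (SP.integ_cons (hDs θ) pstar i).const_mul _),
      integral_finset_sum _ (fun i _ => (SP.integ_cons (hDs θ) pstar i).const_mul _)]
    simp only [integral_const_mul]
    rfl
  have hiii : ∑ j, pstar j * (b j - Hc pstar j) = 0 := by
    rw [← hiii']
    exact Finset.sum_congr rfl fun i _ => by rw [hHeq i]
  calc ∑ θ, wstar θ * ∫ z, (if (∑ i, pstar i * z.2 i) < z.1 then z.1 else 0) ∂ D θ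
      = ∑ θ, wstar θ * (surplus (D θ) pstar + ∑ j, pstar j * consumption (D θ) pstar j) :=
        Finset.sum_congr rfl fun θ _ => by rw [hrid θ]
    _ = ∑ θ, wstar θ * surplus (D θ) pstar + ∑ j, pstar j * Hc pstar j := by
        rw [← SP.swap_sum wstar pstar (fun θ j => consumption (D θ) pstar j),
          ← Finset.sum_add_distrib]
        exact Finset.sum_congr rfl fun θ _ => by ring
    _ = ∑ θ, wstar θ * surplus (D θ) pstar + ∑ j, pstar j * b j := by
        have h1 : ∑ j, pstar j * b j - ∑ j, pstar j * Hc pstar j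
            = ∑ j, pstar j * (b j - Hc pstar j) := by
          rw [← Finset.sum_sub_distrib]
          exact Finset.sum_congr rfl fun j _ => by ring
        rw [hiii] at h1
        linarith
    _ = L wstar pstar := by rw [hL]; ring
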